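/- Let r ≥ 1 and let c_0,...,c_r : ℤ → ℂ satisfy c_k(n) = 0 whenever (r+1) ∤ (n+k). Then the sequence l : ℤ → ℂ defined by l(n) = 1 if n = 2^m(r+1) + 1 for some m ≥ 0, and l(n) = 0 otherwise, is a lacunary solution of Σ_{k=0}^r c_k(n) l(n+k) = 0 for all n ∈ ℤ. -/

import Mathlib

/-- `x` is a solution of the linear difference equation with coefficients `a 0, ..., a r`. -/
def IsSol (r : ℕ) (a : ℕ → ℤ → ℂ) (x : ℤ → ℂ) : Prop :=
  ∀ n : ℤ, ∑ k ∈ Finset.range (r + 1), a k n * x (n + k) = 0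

/-- The space of solutions of the linear difference equation. -/
noncomputable def solSpace (r : ℕ) (a : ℕ → ℤ → ℂ) : Submodule ℂ (ℤ → ℂ) where
  carrier := {x | IsSol r a x}
  add_mem' := by
    intro x y hx hy n
    simp only [Pi.add_apply, mul_add, Finset.sum_add_distrib, hx n, hy n, add_zero]
  zero_mem' := by intro n; simp
  smul_mem' := by
    intro c x hx n
    simp only [Pi.smul_apply, smul_eq_mul, mul_left_comm, ← Finset.mul_sum, hx n, mul_zero]

/-- Sequences vanishing on a set `s`. -/
noncomputable def vanishOn (s : Set ℤ) : Submodule ℂ (ℤ → ℂ) where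
  carrier := {x | ∀ n ∈ s, x n = 0}
  add_mem' := by intro x y hx hy n hn; simp [hx n hn, hy n hn]
  zero_mem' := by intro n _; simp
  smul_mem' := by intro c x hx n hn; simp [hx n hn]

/-- A sequence is lacunary if the gaps between consecutive support elements are unbounded. -/
def Lacunary (x : ℤ → ℂ) : Prop :=
  ∀ L : ℤ, ∃ i j : ℤ, x i ≠ 0 ∧ x j ≠ 0 ∧ i < j ∧ L < j - i ∧
    ∀ k : ℤ, i < k → k < j → x k = 0

open scoped Classical in
theorem example_lacunary_solution (r : ℕ) (hr : 1 ≤ r) (c : ℕ → ℤ → ℂ)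
    (hc : ∀ k ≤ r, ∀ n : ℤ, ¬ ((r : ℤ) + 1 ∣ n + k) → c k n = 0) :
    IsSol r c (fun n => if ∃ m : ℕ, n = 2 ^ m * ((r : ℤ) + 1) + 1 then 1 else 0) ∧
    Lacunary (fun n => if ∃ m : ℕ, n = 2 ^ m * ((r : ℤ) + 1) + 1 then 1 else 0) := by
  constructor
  · intro n
    apply Finset.sum_eq_zero
    intro k hk
    simp only [Finset.mem_range, Nat.lt_succ_iff] at hk
    by_cases hd : ((r : ℤ) + 1 ∣ n + k)
    · have hx : (if ∃ m : ℕ, n + (k : ℤ) = 2 ^ m * ((r : ℤ) + 1) + 1 then (1:ℂ) else 0) = 0 := by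
        rw [if_neg]
        rintro ⟨m, hm⟩
        rw [hm] at hd
        have h1 : ((r : ℤ) + 1 ∣ 1) := (dvd_add_right ⟨2 ^ m, by ring⟩).mp hd
        have := Int.le_of_dvd one_pos h1
        omega
      show c k n * (if ∃ m : ℕ, n + (k : ℤ) = 2 ^ m * ((r : ℤ) + 1) + 1 then (1:ℂ) else 0) = 0
      rw [hx, mul_zero]
    · rw [hc k hk n hd, zero_mul]
  · intro L
    set m : ℕ := L.toNat with hm
    refine ⟨2 ^ m * ((r : ℤ) + 1) + 1, 2 ^ (m + 1) * ((r : ℤ) + 1) + 1, ?_, ?_, ?_, ?_, ?_⟩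
    · show (if ∃ t : ℕ, 2 ^ m * ((r : ℤ) + 1) + 1 = 2 ^ t * ((r : ℤ) + 1) + 1 then (1:ℂ) else 0) ≠ 0
      rw [if_pos ⟨m, rfl⟩]; exact one_ne_zero
    · show (if ∃ t : ℕ, 2 ^ (m + 1) * ((r : ℤ) + 1) + 1 = 2 ^ t * ((r : ℤ) + 1) + 1 then (1:ℂ) else 0) ≠ 0
      rw [if_pos ⟨m + 1, rfl⟩]; exact one_ne_zero
    · have h1 : (0:ℤ) < 2 ^ m * ((r : ℤ) + 1) := by positivity
      have : (2:ℤ) ^ (m + 1) = 2 * 2 ^ m := by ring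
      nlinarith
    · have h1 : (L : ℤ) ≤ m := Int.self_le_toNat L
      have h2' : m < 2 ^ m := Nat.lt_two_pow_self
      have h2 : (m : ℤ) < 2 ^ m := by exact_mod_cast h2'
      have h3 : (2:ℤ) ^ m ≤ 2 ^ m * ((r : ℤ) + 1) := by
        nlinarith [pow_pos (by norm_num : (0:ℤ) < 2) m, (Int.ofNat_nonneg r)]
      have : (2:ℤ) ^ (m + 1) = 2 * 2 ^ m := by ring
      nlinarith [pow_pos (by norm_num : (0:ℤ) < 2) m]
    · intro k hik hkj
      show (if ∃ t : ℕ, k = 2 ^ t * ((r : ℤ) + 1) + 1 then (1:ℂ) else 0) = 0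
      rw [if_neg]
      rintro ⟨t, rfl⟩
      have hr1 : (0:ℤ) < (r : ℤ) + 1 := by positivity
      have h1 : (2:ℤ) ^ m < 2 ^ t :=
        (mul_lt_mul_iff_left₀ hr1).mp (by linarith : 2 ^ m * ((r : ℤ) + 1) < 2 ^ t * ((r : ℤ) + 1))
      have h2 : (2:ℤ) ^ t < 2 ^ (m + 1) :=
        (mul_lt_mul_iff_left₀ hr1).mp (by linarith : 2 ^ t * ((r : ℤ) + 1) < 2 ^ (m + 1) * ((r : ℤ) + 1))
      have hmt : m < t := by
        by_contra h
        push_neg at h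
        exact absurd (pow_le_pow_right₀ (by norm_num : (1:ℤ) ≤ 2) h) (not_le.mpr h1)
      exact absurd (pow_le_pow_right₀ (by norm_num : (1:ℤ) ≤ 2) hmt) (not_le.mpr h2)
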